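/- There exists a graph homomorphism τ from the standard Cayley graph of Z^d to itself such that: (1) for every i ∈ Z^d \ {0}, ‖τ(i)‖₁ < ‖i‖₁; (2) τ(0) = e₁; (3) for every i ∈ Z^d, τ(i) is adjacent to i; (4) for every n, if i, j ∈ Z^d are adjacent with i ∉ F_n and j ∈ F_n, then τ(i) = j, where F_n = {−n,…,n}^d. -/
import Mathlib


/-- Adjacency in the standard Cayley graph of `ℤ^d`: ℓ¹-distance one. -/
def adjZ {d : ℕ} (i j : Fin d → ℤ) : Prop := (∑ t, |i t - j t|) = 1

/-- The ℓ¹-norm on `ℤ^d`. -/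
def norm1 {d : ℕ} (i : Fin d → ℤ) : ℤ := ∑ t, |i t|

/-- The box `F_n = {−n,…,n}^d`. -/
def boxF {d : ℕ} (n : ℕ) : Set (Fin d → ℤ) := {i | ∀ t, |i t| ≤ (n : ℤ)}

namespace Stmt5Aux

variable {d : ℕ}

def sgn (a : ℤ) : ℤ := if 0 < a then 1 else -1

lemma sgn_spec (a : ℤ) : (sgn a = 1 ∧ 0 < a) ∨ (sgn a = -1 ∧ a ≤ 0) := by
  unfold sgn; split <;> omega

lemma adjZ_iff (i j : Fin d → ℤ) :
    adjZ i j ↔ ∃ s, |i s - j s| = 1 ∧ ∀ v, v ≠ s → i v = j v := by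
  constructor
  · intro h
    unfold adjZ at h
    by_cases hz : ∀ s, i s = j s
    · exfalso
      have : (∑ t, |i t - j t|) = 0 := Finset.sum_eq_zero fun t _ => by
        rw [hz t]; simp
      omega
    push_neg at hz
    obtain ⟨s, hs⟩ := hz
    have h1 : 1 ≤ |i s - j s| := Int.one_le_abs (sub_ne_zero.mpr hs)
    have hle : |i s - j s| ≤ ∑ t, |i t - j t| :=
      Finset.single_le_sum (f := fun t => |i t - j t|)
        (fun t _ => abs_nonneg _) (Finset.mem_univ s)
    have habs : |i s - j s| = 1 := by omega
    have hsum : |i s - j s| + ∑ t ∈ Finset.univ.erase s, |i t - j t| = ∑ t, |i t - j t| :=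
      Finset.add_sum_erase _ (fun t => |i t - j t|) (Finset.mem_univ s)
    have hrest : ∑ t ∈ Finset.univ.erase s, |i t - j t| = 0 := by omega
    have hzero := (Finset.sum_eq_zero_iff_of_nonneg (fun t _ => abs_nonneg _)).1 hrest
    refine ⟨s, habs, fun v hv => ?_⟩
    have := hzero v (Finset.mem_erase.mpr ⟨hv, Finset.mem_univ v⟩)
    have : i v - j v = 0 := abs_eq_zero.mp this
    omega
  · rintro ⟨s, hs1, hs2⟩
    unfold adjZ
    have hsum : |i s - j s| + ∑ t ∈ Finset.univ.erase s, |i t - j t| = ∑ t, |i t - j t| :=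
      Finset.add_sum_erase _ (fun t => |i t - j t|) (Finset.mem_univ s)
    have hrest : ∑ t ∈ Finset.univ.erase s, |i t - j t| = 0 :=
      Finset.sum_eq_zero fun t ht => by
        rw [hs2 t (Finset.mem_erase.mp ht).1]; simp
    omega

def mset (i : Fin d → ℤ) : Finset (Fin d) :=
  Finset.univ.filter fun t => ∀ u, |i u| ≤ |i t|

lemma mset_ne (hd : 0 < d) (i : Fin d → ℤ) : (mset i).Nonempty := by
  obtain ⟨t, _, ht⟩ := Finset.exists_max_image Finset.univ (fun t => |i t|)
    ⟨⟨0, hd⟩, Finset.mem_univ _⟩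
  exact ⟨t, Finset.mem_filter.mpr ⟨Finset.mem_univ t, fun u => ht u (Finset.mem_univ u)⟩⟩

def mi (hd : 0 < d) (i : Fin d → ℤ) : Fin d := (mset i).min' (mset_ne hd i)

lemma mi_max (hd : 0 < d) (i : Fin d → ℤ) (u : Fin d) : |i u| ≤ |i (mi hd i)| := by
  have := (mset i).min'_mem (mset_ne hd i)
  exact (Finset.mem_filter.mp this).2 u

lemma mi_min (hd : 0 < d) (i : Fin d → ℤ) (t : Fin d) (h : ∀ u, |i u| ≤ |i t|) :
    mi hd i ≤ t :=
  Finset.min'_le _ _ (Finset.mem_filter.mpr ⟨Finset.mem_univ t, h⟩)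

lemma mi_unique (hd : 0 < d) (i : Fin d → ℤ) (t : Fin d)
    (h : ∀ v, v ≠ t → |i v| < |i t|) : mi hd i = t := by
  by_contra hne
  have h1 := mi_max hd i t
  have h2 := h _ hne
  omega

lemma mi_ne_zero (hd : 0 < d) (i : Fin d → ℤ) (h : i ≠ 0) : i (mi hd i) ≠ 0 := by
  obtain ⟨v, hv⟩ := Function.ne_iff.mp h
  simp only [Pi.zero_apply] at hv
  intro h0
  have := mi_max hd i v
  rw [h0] at this
  simp only [abs_zero] at this
  exact hv (abs_nonpos_iff.mp this)

def tau (hd : 0 < d) (i : Fin d → ℤ) : Fin d → ℤ :=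
  if i = 0 then (fun t => if t = ⟨0, hd⟩ then 1 else 0)
  else fun v => if v = mi hd i then i v - sgn (i v) else i v

lemma tau_zero (hd : 0 < d) :
    tau hd (0 : Fin d → ℤ) = fun t => if t = ⟨0, hd⟩ then 1 else 0 := if_pos rfl

lemma tau_ne (hd : 0 < d) {i : Fin d → ℤ} (h : i ≠ 0) :
    tau hd i = fun v => if v = mi hd i then i v - sgn (i v) else i v := if_neg h

lemma step_eq {a b : ℤ} (_ha : a ≠ 0) (h1 : |a - b| = 1) (h2 : |b| = |a| - 1) :
    a - sgn a = b := by
  rcases sgn_spec a with ⟨hs, hp⟩ | ⟨hs, hp⟩ <;> rw [hs] <;>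
    simp only [Int.abs_eq_natAbs] at h1 h2 <;> omega

/-- If a vector is `0` off `s` and has `|·| = 1` at `s`, then `tau` of it is `0`. -/
lemma tau_unit (hd : 0 < d) {j : Fin d → ℤ} {s : Fin d}
    (hjs : |j s| = 1) (hjv : ∀ v, v ≠ s → j v = 0) : tau hd j = 0 := by
  have hj0 : j ≠ 0 := by
    intro h
    rw [h] at hjs
    simp at hjs
  have hmj : mi hd j = s := mi_unique hd j s fun v hv => by
    rw [hjv v hv, abs_zero, hjs]; norm_num
  have hsz : j s - sgn (j s) = 0 := by
    rcases sgn_spec (j s) with ⟨hg, hp⟩ | ⟨hg, hp⟩ <;> rw [hg] <;>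
      simp only [Int.abs_eq_natAbs] at hjs <;> omega
  rw [tau_ne hd hj0]
  funext v
  by_cases hvm : v = mi hd j
  · rw [if_pos hvm, hvm, hmj, hsz, Pi.zero_apply]
  · rw [if_neg hvm, Pi.zero_apply]
    exact hjv v (by rwa [hmj] at hvm)

end Stmt5Aux

open Stmt5Aux in
theorem stmt5 (d : ℕ) (hd : 0 < d) :
    ∃ τ : (Fin d → ℤ) → (Fin d → ℤ),
      (∀ i j, adjZ i j → adjZ (τ i) (τ j)) ∧
      (∀ i, i ≠ 0 → norm1 (τ i) < norm1 i) ∧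
      (τ 0 = fun t => if t = ⟨0, hd⟩ then 1 else 0) ∧
      (∀ i, adjZ (τ i) i) ∧
      (∀ n : ℕ, ∀ i j, adjZ i j → i ∉ boxF n → j ∈ boxF n → τ i = j) := by
  refine ⟨tau hd, ?_, ?_, tau_zero hd, ?_, ?_⟩
  · -- homomorphism
    intro i j hij
    obtain ⟨s, hs1, hs2⟩ := (adjZ_iff i j).mp hij
    by_cases hi0 : i = 0
    · -- i = 0
      subst hi0
      have hjs : |j s| = 1 := by simpa using hs1
      have hjv : ∀ v, v ≠ s → j v = 0 := fun v hv => by simpa using (hs2 v hv).symm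
      rw [tau_unit hd hjs hjv, tau_zero hd]
      refine (adjZ_iff _ _).mpr ⟨⟨0, hd⟩, ?_, fun v hv => ?_⟩
      · simp
      · simp [hv]
    by_cases hj0 : j = 0
    · -- j = 0
      subst hj0
      have his : |i s| = 1 := by simpa using hs1
      have hiv : ∀ v, v ≠ s → i v = 0 := fun v hv => by simpa using hs2 v hv
      rw [tau_unit hd his hiv, tau_zero hd]
      refine (adjZ_iff _ _).mpr ⟨⟨0, hd⟩, ?_, fun v hv => ?_⟩
      · simp
      · simp [hv]
    -- both nonzero
    rw [tau_ne hd hi0, tau_ne hd hj0]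
    have hit : i (mi hd i) ≠ 0 := mi_ne_zero hd i hi0
    have hju : j (mi hd j) ≠ 0 := mi_ne_zero hd j hj0
    by_cases htu : mi hd i = mi hd j
    · by_cases hts : mi hd i = s
      · -- mi i = mi j = s
        refine (adjZ_iff _ _).mpr ⟨s, ?_, fun v hv => ?_⟩
        · have hmij : mi hd j = s := htu.symm.trans hts
          rw [if_pos hts.symm, if_pos hmij.symm]
          rw [hts] at hit; rw [hmij] at hju
          rcases sgn_spec (i s) with ⟨hg, hp⟩ | ⟨hg, hp⟩ <;>
            rcases sgn_spec (j s) with ⟨hg', hp'⟩ | ⟨hg', hp'⟩ <;> rw [hg, hg'] <;>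
            simp only [Int.abs_eq_natAbs] at hs1 ⊢ <;> omega
        · rw [if_neg (fun h => hv (h.trans hts)),
            if_neg (fun h => hv (h.trans (htu.symm.trans hts))), hs2 v hv]
      · -- mi i = mi j ≠ s
        refine (adjZ_iff _ _).mpr ⟨s, ?_, fun v hv => ?_⟩
        · rw [if_neg (fun h => hts h.symm), if_neg (fun h => hts (htu.trans h.symm))]
          exact hs1
        · by_cases hvt : v = mi hd i
          · rw [if_pos hvt, if_pos (hvt.trans htu), hvt,
              hs2 (mi hd i) (fun h => hts h)]
          · rw [if_neg hvt, if_neg (fun h => hvt (h.trans htu.symm)), hs2 v hv]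
    · -- mi i ≠ mi j
      by_cases hst : s = mi hd i
      · -- the changed coordinate is i's max coordinate
        have hs1' : |i (mi hd i) - j (mi hd i)| = 1 := hst ▸ hs1
        have hdisj : |j (mi hd i)| = |i (mi hd i)| - 1 ∨
            |j (mi hd i)| = |i (mi hd i)| + 1 := by
          simp only [Int.abs_eq_natAbs] at hs1' ⊢; omega
        have hd1 : |j (mi hd i)| = |i (mi hd i)| - 1 := by
          rcases hdisj with h | h
          · exact h
          · exfalso
            apply htu
            refine (mi_unique hd j (mi hd i) fun v hv => ?_).symm
            rw [← hs2 v (by rw [hst]; exact hv)]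
            have hmx := mi_max hd i v
            simp only [Int.abs_eq_natAbs] at h hmx ⊢
            omega
        have hkey : i (mi hd i) - sgn (i (mi hd i)) = j (mi hd i) :=
          step_eq hit hs1' hd1
        have hus : mi hd j ≠ s := fun h => htu (h.trans hst).symm
        refine (adjZ_iff _ _).mpr ⟨mi hd j, ?_, fun v hv => ?_⟩
        · rw [if_neg (fun h => htu h.symm), if_pos rfl,
            ← hs2 (mi hd j) hus]
          have heq : i (mi hd j) - (i (mi hd j) - sgn (i (mi hd j))) =
              sgn (i (mi hd j)) := by ring
          rw [heq]
          rcases sgn_spec (i (mi hd j)) with ⟨hg, _⟩ | ⟨hg, _⟩ <;> rw [hg] <;> simp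
        · by_cases hvt : v = mi hd i
          · rw [if_pos hvt, if_neg hv, hvt, hkey]
          · rw [if_neg hvt, if_neg hv, hs2 v (fun h => hvt (h.trans hst))]
      · by_cases hsu : s = mi hd j
        · -- the changed coordinate is j's max coordinate
          have hs1' : |i (mi hd j) - j (mi hd j)| = 1 := hsu ▸ hs1
          have hdisj : |i (mi hd j)| = |j (mi hd j)| - 1 ∨
              |i (mi hd j)| = |j (mi hd j)| + 1 := by
            simp only [Int.abs_eq_natAbs] at hs1' ⊢; omega
          have hd1 : |i (mi hd j)| = |j (mi hd j)| - 1 := by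
            rcases hdisj with h | h
            · exact h
            · exfalso
              apply htu
              refine mi_unique hd i (mi hd j) fun v hv => ?_
              rw [hs2 v (by rw [hsu]; exact hv)]
              have hmx := mi_max hd j v
              simp only [Int.abs_eq_natAbs] at h hmx ⊢
              omega
          have hkey : j (mi hd j) - sgn (j (mi hd j)) = i (mi hd j) := by
            apply step_eq hju _ hd1
            simp only [Int.abs_eq_natAbs] at hs1' ⊢
            omega
          have hts' : mi hd i ≠ s := fun h => hst h.symm
          refine (adjZ_iff _ _).mpr ⟨mi hd i, ?_, fun v hv => ?_⟩
          · rw [if_pos rfl, if_neg htu,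
              ← hs2 (mi hd i) hts']
            have heq : i (mi hd i) - sgn (i (mi hd i)) - i (mi hd i) =
                -sgn (i (mi hd i)) := by ring
            rw [heq]
            rcases sgn_spec (i (mi hd i)) with ⟨hg, _⟩ | ⟨hg, _⟩ <;> rw [hg] <;> simp
          · by_cases hvu : v = mi hd j
            · rw [if_neg hv, if_pos hvu, hvu, hkey]
            · rw [if_neg hv, if_neg hvu,
                hs2 v (fun h => hvu (h.trans hsu))]
        · -- s is neither max index: contradiction
          exfalso
          have e1 : i (mi hd i) = j (mi hd i) := hs2 _ (fun h => hst h.symm)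
          have e2 : i (mi hd j) = j (mi hd j) := hs2 _ (fun h => hsu h.symm)
          have h1 : |i (mi hd j)| ≤ |i (mi hd i)| := mi_max hd i _
          have h2 : |j (mi hd i)| ≤ |j (mi hd j)| := mi_max hd j _
          have heq : |i (mi hd i)| = |i (mi hd j)| := by
            rw [← e1, ← e2] at h2
            omega
          have hle1 : mi hd i ≤ mi hd j := by
            apply mi_min hd i (mi hd j)
            intro v
            have := mi_max hd i v
            omega
          have hle2 : mi hd j ≤ mi hd i := by
            apply mi_min hd j (mi hd i)
            intro v
            by_cases hvs : v = s
            · have hmx := mi_max hd j v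
              rw [← e2] at hmx
              rw [← e1]
              omega
            · rw [← hs2 v hvs, ← e1]
              exact mi_max hd i v
          exact htu (le_antisymm hle1 hle2)
  · -- norm decrease
    intro i hi
    rw [tau_ne hd hi]
    unfold norm1
    have hit : i (mi hd i) ≠ 0 := mi_ne_zero hd i hi
    have key : ∑ v, |if v = mi hd i then i v - sgn (i v) else i v|
        = (|i (mi hd i) - sgn (i (mi hd i))| + ∑ v ∈ Finset.univ.erase (mi hd i), |i v|) := by
      rw [← Finset.add_sum_erase _ (fun v => |if v = mi hd i then i v - sgn (i v) else i v|)
        (Finset.mem_univ (mi hd i)), if_pos rfl]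
      congr 1
      exact Finset.sum_congr rfl fun v hv => by
        rw [if_neg (Finset.mem_erase.mp hv).1]
    rw [key]
    have hsum : |i (mi hd i)| + ∑ v ∈ Finset.univ.erase (mi hd i), |i v| = ∑ v, |i v| :=
      Finset.add_sum_erase _ (fun v => |i v|) (Finset.mem_univ _)
    have hdec : |i (mi hd i) - sgn (i (mi hd i))| = |i (mi hd i)| - 1 := by
      rcases sgn_spec (i (mi hd i)) with ⟨hg, hp⟩ | ⟨hg, hp⟩ <;> rw [hg] <;>
        simp only [Int.abs_eq_natAbs] <;> omega
    omega
  · -- adjacency to self-image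
    intro i
    by_cases hi : i = 0
    · subst hi
      rw [tau_zero hd]
      refine (adjZ_iff _ _).mpr ⟨⟨0, hd⟩, ?_, fun v hv => ?_⟩
      · simp
      · simp [hv]
    · rw [tau_ne hd hi]
      refine (adjZ_iff _ _).mpr ⟨mi hd i, ?_, fun v hv => ?_⟩
      · rw [if_pos rfl]
        have heq : i (mi hd i) - sgn (i (mi hd i)) - i (mi hd i) =
            -sgn (i (mi hd i)) := by ring
        rw [heq]
        rcases sgn_spec (i (mi hd i)) with ⟨hg, _⟩ | ⟨hg, _⟩ <;> rw [hg] <;> simp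
      · rw [if_neg hv]
  · -- boundary condition
    intro n i j hij hiF hjF
    obtain ⟨s, hs1, hs2⟩ := (adjZ_iff i j).mp hij
    have hjb : ∀ v, |j v| ≤ (n : ℤ) := hjF
    have hib : ∃ v, (n : ℤ) < |i v| := by
      by_contra h
      push_neg at h
      exact hiF h
    obtain ⟨w, hw⟩ := hib
    have hws : w = s := by
      by_contra hne
      rw [hs2 w hne] at hw
      exact absurd (hjb w) (not_le.mpr hw)
    subst hws
    have hjw : |j w| = |i w| - 1 := by
      have h1 := hjb w
      simp only [Int.abs_eq_natAbs] at hs1 h1 hw ⊢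
      omega
    have hiw0 : i w ≠ 0 := by
      intro h; rw [h] at hw; simp at hw; omega
    have hi0 : i ≠ 0 := fun h => hiw0 (by rw [h]; rfl)
    have hmi' : mi hd i = w := mi_unique hd i w fun v hv => by
      rw [hs2 v hv]
      have h1 := hjb v
      omega
    rw [tau_ne hd hi0]
    funext v
    by_cases hvw : v = w
    · rw [hmi', if_pos hvw, hvw]
      exact step_eq hiw0 hs1 hjw
    · rw [hmi', if_neg hvw, hs2 v hvw]
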